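/- Let F be a Muller condition over a finite set of colours Γ and let M = (M, m₀, μ : M × Γ → M) be an arena-independent memory for ε-free F-games in which every state is reachable from m₀ by some finite sequence of letters. Consider the deterministic Muller automaton A_M with state set M, initial state m₀, transition function δ(m, a) = (μ(m, a), a) and acceptance condition F. Then for every pair of cycles ℓ₁, ℓ₂ of A_M with a common state, if γ(ℓ₁) ∉ F and γ(ℓ₂) ∉ F, then γ(ℓ₁ ∪ ℓ₂) ∉ F; consequently a Rabin condition can be defined on top of A_M, yielding a Rabin automaton recognising L_F with |M| states. -/

import Mathlib

/-- The set of letters occurring infinitely often in the infinite word `w`. -/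
def InfOcc {α : Type} (w : ℕ → α) : Set α :=
  {a | ∀ n, ∃ m, n ≤ m ∧ w m = a}

/-- A deterministic transition-based automaton over input alphabet `σ`
with output alphabet `Γ` and set of states `Q`. -/
structure DetAut (σ Γ Q : Type) where
  init : Q
  δ : Q → σ → Q × Γ

namespace DetAut

variable {σ Γ Q : Type}

/-- The sequence of states of the run of `A` over `w`. -/
def run (A : DetAut σ Γ Q) (w : ℕ → σ) : ℕ → Q
  | 0 => A.init
  | n + 1 => (A.δ (run A w n) (w n)).1

/-- The output word produced by `A` reading `w`. -/
def output (A : DetAut σ Γ Q) (w : ℕ → σ) (n : ℕ) : Γ :=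
  (A.δ (A.run w n) (w n)).2

end DetAut

/-- `u` satisfies the Rabin condition given by the pairs in `R`. -/
def RabinAccept {Γ : Type} (R : List (Set Γ × Set Γ)) (u : ℕ → Γ) : Prop :=
  ∃ p ∈ R, (InfOcc u ∩ p.1).Nonempty ∧ InfOcc u ∩ p.2 = ∅

/-- `u` satisfies the Streett condition given by the pairs in `R`. -/
def StreettAccept {Γ : Type} (R : List (Set Γ × Set Γ)) (u : ℕ → Γ) : Prop :=
  ∀ p ∈ R, (InfOcc u ∩ p.1).Nonempty → (InfOcc u ∩ p.2).Nonempty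

/-- The language accepted by the automaton `A` with Rabin condition `R`. -/
def RabinLang {σ Γ Q : Type} (A : DetAut σ Γ Q) (R : List (Set Γ × Set Γ)) :
    Set (ℕ → σ) :=
  {w | RabinAccept R (A.output w)}

/-- The Muller language associated to the Muller condition `F`. -/
def LF {Γ : Type} (F : Set (Set Γ)) : Set (ℕ → Γ) :=
  {w | InfOcc w ∈ F}

namespace DetAut

variable {σ Γ Q : Type}

/-- The target state of the edge `e = (q, a)` of the transition graph of `A`. -/
def next (A : DetAut σ Γ Q) (e : Q × σ) : Q := (A.δ e.1 e.2).1

/-- The output colour of the edge `e = (q, a)` of the transition graph of `A`. -/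
def ecol (A : DetAut σ Γ Q) (e : Q × σ) : Γ := (A.δ e.1 e.2).2

/-- `ℓ` is a cycle of `A`: some closed path in the transition graph of `A`
traverses exactly the edges of `ℓ`. -/
def IsCycle (A : DetAut σ Γ Q) (ℓ : Set (Q × σ)) : Prop :=
  ∃ (e : Q × σ) (l : List (Q × σ)),
    List.Chain (fun e₁ e₂ => A.next e₁ = e₂.1) e l ∧
    A.next ((e :: l).getLast (List.cons_ne_nil e l)) = e.1 ∧
    {x | x ∈ e :: l} = ℓ

/-- The set of states incident to the edges of `ℓ`. -/
def statesOf (A : DetAut σ Γ Q) (ℓ : Set (Q × σ)) : Set Q :=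
  {q | ∃ e ∈ ℓ, e.1 = q ∨ A.next e = q}

/-- The set of output colours appearing on the edges of `ℓ`. -/
def cycCol (A : DetAut σ Γ Q) (ℓ : Set (Q × σ)) : Set Γ :=
  A.ecol '' ℓ

/-- The language accepted by `A` with the Muller condition `F`. -/
def MullerLang (A : DetAut σ Γ Q) (F : Set (Set Γ)) : Set (ℕ → σ) :=
  {w | InfOcc (A.output w) ∈ F}

/-- A Rabin condition can be defined on top of the Muller automaton `(A, F)`:
there is a Rabin automaton with the same states, initial state and transitions
as `A`, except for the output colours of the transitions, accepting the same
language. -/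
def RabinOnTop (A : DetAut σ Γ Q) (F : Set (Set Γ)) : Prop :=
  ∃ (Γ' : Type) (out' : Q → σ → Γ') (R : List (Set Γ' × Set Γ')),
    RabinLang (DetAut.mk A.init (fun q a => ((A.δ q a).1, out' q a))) R
      = A.MullerLang F

end DetAut

/-- A (transition-coloured) game arena with colours in `Γ`: a finite directed
graph with a partition of the vertices between Eve (`EveV`) and Adam, an
initial vertex, and a colouring of the edges by `Γ ∪ {ε}` (`ε = none`), such
that every vertex has an outgoing edge and no cycle is labelled exclusively
by `ε`. -/
structure Game (Γ : Type) where
  V : Type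
  [finV : Fintype V]
  EveV : Set V
  edge : V → V → Prop
  v0 : V
  col : V → V → Option Γ
  exists_succ : ∀ v, ∃ u, edge v u
  no_eps_cycle : ¬ ∃ (v : V) (l : List V),
      List.Chain (fun a b => edge a b ∧ col a b = none) v (l ++ [v])

attribute [instance] Game.finV

namespace Game

variable {Γ : Type}

/-- `ρ` is a play of `G`: an infinite path from the initial vertex. -/
def IsPlay (G : Game Γ) (ρ : ℕ → G.V) : Prop :=
  ρ 0 = G.v0 ∧ ∀ n, G.edge (ρ n) (ρ (n + 1))

/-- The set of colours of `Γ` produced infinitely often by the play `ρ`; this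
is the set of letters occurring infinitely often in the output of `ρ` (the word
obtained from the labels of its edges after deleting the occurrences of `ε`). -/
def InfCol (G : Game Γ) (ρ : ℕ → G.V) : Set Γ :=
  {a | ∀ n, ∃ m, n ≤ m ∧ G.col (ρ m) (ρ (m + 1)) = some a}

/-- The history of the play `ρ` before it reaches position `n`. -/
def hist (G : Game Γ) (ρ : ℕ → G.V) (n : ℕ) : List G.V :=
  List.ofFn (fun i : Fin n => ρ i.1)

/-- Eve wins the game `G` with the Muller winning condition `F`: she has a
strategy (a choice of an outgoing edge after each finite play ending in one of
her vertices) such that every play adhering to it is winning for her. -/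
def WinsEve (G : Game Γ) (F : Set (Set Γ)) : Prop :=
  ∃ str : List G.V → G.V → G.V,
    (∀ h v, v ∈ G.EveV → G.edge v (str h v)) ∧
    ∀ ρ : ℕ → G.V, G.IsPlay ρ →
      (∀ n, ρ n ∈ G.EveV → ρ (n + 1) = str (G.hist ρ n) (ρ n)) →
      G.InfCol ρ ∈ F

/-- The game `G` is `ε`-free: no edge is coloured by `ε`. -/
def EpsFree (G : Game Γ) : Prop :=
  ∀ v u, G.edge v u → G.col v u ≠ none

end Game

/-- A memory structure for the game `G`: a finite set of memory states with an
initial state, updated after reading the edges of the game. -/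
structure Mem {Γ : Type} (G : Game Γ) where
  M : Type
  [finM : Fintype M]
  m0 : M
  upd : M → G.V × G.V → M

attribute [instance] Mem.finM

namespace Mem

variable {Γ : Type} {G : Game Γ}

/-- The state of the memory after the first `n` moves of the play `ρ`. -/
def st (m : Mem G) (ρ : ℕ → G.V) : ℕ → m.M
  | 0 => m.m0
  | n + 1 => m.upd (st m ρ n) (ρ n, ρ (n + 1))

/-- The memory structure `m` sets a winning strategy in `G` for the Muller
condition `F`: there is a next-move function such that the induced strategy is
winning for Eve. -/
def SetsWinning (m : Mem G) (F : Set (Set Γ)) : Prop :=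
  ∃ nm : G.V → m.M → G.V,
    (∀ v x, v ∈ G.EveV → G.edge v (nm v x)) ∧
    ∀ ρ : ℕ → G.V, G.IsPlay ρ →
      (∀ n, ρ n ∈ G.EveV → ρ (n + 1) = nm (ρ n) (st m ρ n)) →
      G.InfCol ρ ∈ F

/-- The memory structure `m` is chromatic: its update function only depends on
the colours of the edges, and it does not move on `ε`-edges. -/
def Chromatic (m : Mem G) : Prop :=
  ∃ μ' : m.M → Γ → m.M, ∀ x v u, G.edge v u →
    (G.col v u = none → m.upd x (v, u) = x) ∧
    ∀ a, G.col v u = some a → m.upd x (v, u) = μ' x a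

end Mem

/-- An arena-independent memory skeleton: a finite set of memory states with an
initial state, updated by reading colours of `Γ`. -/
structure MemSkel (Γ : Type) where
  M : Type
  [finM : Fintype M]
  m0 : M
  upd : M → Γ → M

attribute [instance] MemSkel.finM

namespace MemSkel

variable {Γ : Type}

/-- The (chromatic) memory structure induced by the skeleton `s` on the game
`G`: the memory is updated by the colour of the edge read, and does not move
on `ε`-edges. -/
def toMem (s : MemSkel Γ) (G : Game Γ) : Mem G where
  M := s.M
  finM := s.finM
  m0 := s.m0
  upd := fun x e =>
    match G.col e.1 e.2 with
    | none => x
    | some a => s.upd x a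

/-- `s` is an arena-independent memory for the Muller condition `F`: for every
`F`-game won by Eve, the induced memory sets a winning strategy. -/
def ArenaIndep (s : MemSkel Γ) (F : Set (Set Γ)) : Prop :=
  ∀ G : Game Γ, G.WinsEve F → (s.toMem G).SetsWinning F

/-- `s` is an arena-independent memory for `ε`-free `F`-games. -/
def ArenaIndepEf (s : MemSkel Γ) (F : Set (Set Γ)) : Prop :=
  ∀ G : Game Γ, G.EpsFree → G.WinsEve F → (s.toMem G).SetsWinning F

end MemSkel

/-- `memGen F`: the least `n` such that every `F`-game won by Eve admits a
winning strategy set by a memory structure with `n` states. -/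
noncomputable def memGen {Γ : Type} (F : Set (Set Γ)) : ℕ :=
  sInf {n | ∀ G : Game Γ, G.WinsEve F →
    ∃ m : Mem G, Fintype.card m.M = n ∧ m.SetsWinning F}

/-- `memGenEf F`: as `memGen F`, quantifying only over `ε`-free games. -/
noncomputable def memGenEf {Γ : Type} (F : Set (Set Γ)) : ℕ :=
  sInf {n | ∀ G : Game Γ, G.EpsFree → G.WinsEve F →
    ∃ m : Mem G, Fintype.card m.M = n ∧ m.SetsWinning F}

/-- `memChrom F`: the least `n` such that every `F`-game won by Eve admits a
winning strategy set by a chromatic memory with `n` states. -/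
noncomputable def memChrom {Γ : Type} (F : Set (Set Γ)) : ℕ :=
  sInf {n | ∀ G : Game Γ, G.WinsEve F →
    ∃ m : Mem G, Fintype.card m.M = n ∧ m.Chromatic ∧ m.SetsWinning F}

/-- `memChromEf F`: as `memChrom F`, quantifying only over `ε`-free games. -/
noncomputable def memChromEf {Γ : Type} (F : Set (Set Γ)) : ℕ :=
  sInf {n | ∀ G : Game Γ, G.EpsFree → G.WinsEve F →
    ∃ m : Mem G, Fintype.card m.M = n ∧ m.Chromatic ∧ m.SetsWinning F}

/-- `memInd F`: the least size of an arena-independent memory for `F`. -/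
noncomputable def memInd {Γ : Type} (F : Set (Set Γ)) : ℕ :=
  sInf {n | ∃ s : MemSkel Γ, Fintype.card s.M = n ∧ s.ArenaIndep F}

/-- `memIndEf F`: the least size of an arena-independent memory for `ε`-free
`F`-games. -/
noncomputable def memIndEf {Γ : Type} (F : Set (Set Γ)) : ℕ :=
  sInf {n | ∃ s : MemSkel Γ, Fintype.card s.M = n ∧ s.ArenaIndepEf F}

/-- The deterministic Muller automaton `A_M` built on the memory skeleton `s`:
states `s.M`, initial state `s.m0`, transitions `δ(m, a) = (s.upd m a, a)`. -/
def AM {Γ : Type} (s : MemSkel Γ) : DetAut Γ Γ s.M :=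
  DetAut.mk s.m0 (fun m a => (s.upd m a, a))

namespace Stmt14

variable {Γ : Type}

/-- reading a word from a state -/
def rd (s : MemSkel Γ) (q : s.M) (u : List Γ) : s.M := u.foldl s.upd q

@[simp] lemma rd_nil (s : MemSkel Γ) (q : s.M) : rd s q [] = q := rfl

@[simp] lemma rd_cons (s : MemSkel Γ) (q : s.M) (a : Γ) (u : List Γ) :
    rd s q (a :: u) = rd s (s.upd q a) u := rfl

lemma rd_append (s : MemSkel Γ) (q : s.M) (u v : List Γ) :
    rd s q (u ++ v) = rd s (rd s q u) v := List.foldl_append ..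

/-- the list of edges traversed when reading `u` from `q` -/
def eds (s : MemSkel Γ) (q : s.M) : List Γ → List (s.M × Γ)
  | [] => []
  | a :: u => (q, a) :: eds s (s.upd q a) u

@[simp] lemma eds_nil (s : MemSkel Γ) (q : s.M) : eds s q [] = [] := rfl

@[simp] lemma eds_cons (s : MemSkel Γ) (q : s.M) (a : Γ) (u : List Γ) :
    eds s q (a :: u) = (q, a) :: eds s (s.upd q a) u := rfl

lemma eds_append (s : MemSkel Γ) (u : List Γ) : ∀ (v : List Γ) (q : s.M),
    eds s q (u ++ v) = eds s q u ++ eds s (rd s q u) v := by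
  induction u with
  | nil => intro v q; simp
  | cons a u ih => intro v q; simp [ih]

@[simp] lemma map_snd_eds (s : MemSkel Γ) : ∀ (u : List Γ) (q : s.M),
    (eds s q u).map Prod.snd = u := by
  intro u; induction u with
  | nil => intro q; rfl
  | cons a u ih => intro q; simp [ih]

@[simp] lemma eds_eq_nil_iff (s : MemSkel Γ) (q : s.M) (u : List Γ) :
    eds s q u = [] ↔ u = [] := by
  cases u <;> simp [eds]

@[simp] lemma am_next (s : MemSkel Γ) (e : s.M × Γ) :
    (AM s).next e = s.upd e.1 e.2 := rfl

@[simp] lemma am_ecol (s : MemSkel Γ) (e : s.M × Γ) :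
    (AM s).ecol e = e.2 := rfl

lemma chain'_eds (s : MemSkel Γ) : ∀ (u : List Γ) (q : s.M),
    List.Chain' (fun e₁ e₂ => (AM s).next e₁ = e₂.1) (eds s q u) := by
  intro u
  induction u with
  | nil => intro q; exact List.IsChain.nil
  | cons a u ih =>
    intro q
    cases u with
    | nil => exact List.IsChain.singleton _
    | cons b v =>
      refine List.IsChain.cons_cons ?_ (ih (s.upd q a))
      rfl

lemma next_getLast_eds (s : MemSkel Γ) : ∀ (u : List Γ) (q : s.M) (h : eds s q u ≠ []),
    (AM s).next ((eds s q u).getLast h) = rd s q u := by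
  intro u
  induction u with
  | nil => intro q h; simp at h
  | cons a u ih =>
    intro q h
    cases u with
    | nil => simp [eds]
    | cons b v =>
      have h2 : eds s (s.upd q a) (b :: v) ≠ [] := by simp
      have heq : (eds s q (a :: b :: v)).getLast h
          = (eds s (s.upd q a) (b :: v)).getLast h2 := List.getLast_cons h2
      rw [heq, ih (s.upd q a) h2]
      rfl

/-- word → cycle -/
lemma isCycle_of_word (s : MemSkel Γ) (q : s.M) (u : List Γ) (hu : u ≠ [])
    (hq : rd s q u = q) : (AM s).IsCycle {x | x ∈ eds s q u} := by
  obtain ⟨a, v, rfl⟩ := List.exists_cons_of_ne_nil hu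
  refine ⟨(q, a), eds s (s.upd q a) v, ?_, ?_, rfl⟩
  · have := chain'_eds s (a :: v) q
    exact this
  · have h : eds s q (a :: v) ≠ [] := by simp
    have := next_getLast_eds s (a :: v) q h
    simpa [hq] using this

end Stmt14
namespace Stmt14

variable {Γ : Type}

/-- closedness of a list of edges, option form -/
def ClosedL (s : MemSkel Γ) (L : List (s.M × Γ)) : Prop :=
  ∀ x ∈ L.getLast?, ∀ y ∈ L.head?, (AM s).next x = y.1

/-- from a closed chain' list, recover the word representation -/
lemma eds_of_chain (s : MemSkel Γ) :
    ∀ (L : List (s.M × Γ)) (q : s.M), L ≠ [] →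
      List.Chain' (fun e₁ e₂ => (AM s).next e₁ = e₂.1) L →
      (∀ z ∈ L.head?, z.1 = q) →
      eds s q (L.map Prod.snd) = L ∧
        ∀ x ∈ L.getLast?, rd s q (L.map Prod.snd) = (AM s).next x := by
  intro L
  induction L with
  | nil => intro q h; exact absurd rfl h
  | cons x xs ih =>
    intro q hne hch hhead
    have hx1 : x.1 = q := hhead x rfl
    cases xs with
    | nil =>
      constructor
      · show (q, x.2) :: [] = [x]
        rw [← hx1]
      · intro z hz
        have hz' : z = x := by have h := hz; simp at h; exact h.symm
        subst hz'
        show s.upd q z.2 = s.upd z.1 z.2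
        rw [hx1]
    | cons y ys =>
      have hR : (AM s).next x = y.1 := (List.isChain_cons_cons.1 hch).1
      have hch' := (List.isChain_cons_cons.1 hch).2
      have hupd : s.upd q x.2 = y.1 := by
        rw [← hx1]; exact hR
      obtain ⟨h1, h2⟩ := ih y.1 (by simp) hch' (by intro z hz; have h : y = z := (by simpa using hz); exact congrArg Prod.fst h.symm)
      constructor
      · calc eds s q (List.map Prod.snd (x :: y :: ys))
            = (q, x.2) :: eds s (s.upd q x.2) (List.map Prod.snd (y :: ys)) := rfl
          _ = x :: y :: ys := by rw [hupd, h1, ← hx1]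
      · intro z hz
        rw [List.getLast?_cons_cons] at hz
        calc rd s q (List.map Prod.snd (x :: y :: ys))
            = rd s (s.upd q x.2) (List.map Prod.snd (y :: ys)) := rfl
          _ = (AM s).next z := by rw [hupd]; exact h2 z hz

/-- cycle → word rooted at any state of the cycle -/
lemma word_of_cycle (s : MemSkel Γ) {ℓ : Set (s.M × Γ)} (hc : (AM s).IsCycle ℓ)
    {q : s.M} (hq : q ∈ (AM s).statesOf ℓ) :
    ∃ u : List Γ, u ≠ [] ∧ rd s q u = q ∧ {x | x ∈ eds s q u} = ℓ := by
  classical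
  obtain ⟨e, l, hch, hcl, hset⟩ := hc
  have hch' : List.Chain' (fun e₁ e₂ => (AM s).next e₁ = e₂.1) (e :: l) := hch
  have hclosed : ClosedL s (e :: l) := by
    intro x hx y hy
    rw [List.getLast?_eq_getLast (l := e :: l) (by simp), Option.mem_def, Option.some_inj] at hx
    rw [List.head?_eq_head (by simp), Option.mem_def, Option.some_inj] at hy
    subst hx; subst hy; exact hcl
  -- q is the source of some edge
  have hsrc : ∃ g ∈ e :: l, g.1 = q := by
    obtain ⟨f, hf, hfq⟩ := hq
    have hfL : f ∈ e :: l := by rw [← hset] at hf; exact hf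
    rcases hfq with h | h
    · exact ⟨f, hfL, h⟩
    · obtain ⟨L₁, L₂, hsplit⟩ := List.append_of_mem hfL
      cases L₂ with
      | nil =>
        refine ⟨e, by simp, ?_⟩
        have hlast : (e :: l).getLast (by simp) = f := by
          rw [← Option.some_inj, ← List.getLast?_eq_getLast, hsplit]
          exact List.getLast?_concat
        rw [← hcl, hlast, h]
      | cons y ys =>
        refine ⟨y, by rw [hsplit]; simp, ?_⟩
        have hrel : (AM s).next f = y.1 := by
          have h2 := (List.isChain_append.1
            (by rw [hsplit, show L₁ ++ f :: y :: ys = (L₁ ++ [f]) ++ (y :: ys) by simp] at hch'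
                exact hch')).2.2
          exact h2 f (by rw [List.getLast?_concat]; rfl) y rfl
        rw [← hrel]; exact h
  obtain ⟨g, hgL, hgq⟩ := hsrc
  obtain ⟨L₁, L₂, hsplit⟩ := List.append_of_mem hgL
  have hKne : (g :: L₂) ++ L₁ ≠ [] := by simp
  rw [hsplit] at hch' hclosed
  obtain ⟨hch1, hch2, hjun⟩ := List.isChain_append.1 hch'
  -- chain' of the rotation
  have hchK : List.Chain' (fun e₁ e₂ => (AM s).next e₁ = e₂.1) ((g :: L₂) ++ L₁) := by
    refine List.isChain_append.2 ?_
    refine ⟨hch2, hch1, ?_⟩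
    intro x hx y hy
    have h1 : L₁ ≠ [] := by rintro rfl; simp at hy
    refine hclosed x ?_ y ?_
    · rwa [List.getLast?_append_of_ne_nil _ (by simp)]
    · rwa [List.head?_append_of_ne_nil _ h1]
  -- closedness of the rotation
  have hclK : ClosedL s ((g :: L₂) ++ L₁) := by
    intro x hx y hy
    rcases eq_or_ne L₁ [] with h1 | h1
    · subst h1
      rw [List.nil_append] at hclosed
      rw [List.append_nil] at hx hy
      exact hclosed x hx y hy
    · have hx' : x ∈ L₁.getLast? := by
        rwa [List.getLast?_append_of_ne_nil _ h1] at hx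
      have hy' : y = g := by
        rw [List.head?_append_of_ne_nil _ (by simp : (g :: L₂ : List _) ≠ [])] at hy
        have h := hy; simp at h; exact h.symm
      subst hy'
      exact hjun x hx' y rfl
  obtain ⟨h1, h2⟩ := eds_of_chain s ((g :: L₂) ++ L₁) q hKne hchK
    (by intro z hz
        rw [List.head?_append_of_ne_nil _ (by simp : (g :: L₂ : List _) ≠ [])] at hz
        have h : g = z := by simpa using hz
        rw [← h, hgq])
  refine ⟨((g :: L₂) ++ L₁).map Prod.snd, by simp, ?_, ?_⟩
  · have hzmem : ((g :: L₂) ++ L₁).getLast hKne ∈ ((g :: L₂) ++ L₁).getLast? := by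
      rw [List.getLast?_eq_getLast hKne]; rfl
    rw [h2 _ hzmem, hclK _ hzmem g (by rw [List.head?_append_of_ne_nil _ (by simp)]; rfl), hgq]
  · rw [h1, ← hset]
    ext x
    simp only [Set.mem_setOf_eq, hsplit]
    simp only [List.mem_append, List.mem_cons]
    tauto

end Stmt14
namespace Stmt14

variable {Γ : Type}

lemma cycle_nonempty {s : MemSkel Γ} {ℓ : Set (s.M × Γ)} (hc : (AM s).IsCycle ℓ) :
    ℓ.Nonempty := by
  obtain ⟨e, l, _, _, hset⟩ := hc
  exact ⟨e, by rw [← hset]; simp⟩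

lemma src_mem_statesOf {s : MemSkel Γ} {ℓ : Set (s.M × Γ)} {e : s.M × Γ} (he : e ∈ ℓ) :
    e.1 ∈ (AM s).statesOf ℓ := ⟨e, he, Or.inl rfl⟩

lemma next_mem_statesOf {s : MemSkel Γ} {ℓ : Set (s.M × Γ)} {e : s.M × Γ} (he : e ∈ ℓ) :
    s.upd e.1 e.2 ∈ (AM s).statesOf ℓ := ⟨e, he, Or.inr rfl⟩

lemma cycCol_eq_snd_image (s : MemSkel Γ) (ℓ : Set (s.M × Γ)) :
    (AM s).cycCol ℓ = Prod.snd '' ℓ := rfl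

lemma cycCol_eds (s : MemSkel Γ) (q : s.M) (u : List Γ) :
    (AM s).cycCol {x | x ∈ eds s q u} = {a | a ∈ u} := by
  ext a
  constructor
  · rintro ⟨x, hx, rfl⟩
    have : x.2 ∈ (eds s q u).map Prod.snd := List.mem_map_of_mem hx
    rwa [map_snd_eds] at this
  · intro ha
    have : a ∈ (eds s q u).map Prod.snd := by rwa [map_snd_eds]
    obtain ⟨x, hx, rfl⟩ := List.mem_map.1 this
    exact ⟨x, hx, rfl⟩

lemma union_isCycle (s : MemSkel Γ) {ℓ₁ ℓ₂ : Set (s.M × Γ)}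
    (h1 : (AM s).IsCycle ℓ₁) (h2 : (AM s).IsCycle ℓ₂)
    (hq : ((AM s).statesOf ℓ₁ ∩ (AM s).statesOf ℓ₂).Nonempty) :
    (AM s).IsCycle (ℓ₁ ∪ ℓ₂) := by
  obtain ⟨q, hq1, hq2⟩ := hq
  obtain ⟨u₁, hu1ne, hu1rd, hu1set⟩ := word_of_cycle s h1 hq1
  obtain ⟨u₂, hu2ne, hu2rd, hu2set⟩ := word_of_cycle s h2 hq2
  have := isCycle_of_word s q (u₁ ++ u₂) (by simp [hu1ne])
    (by rw [rd_append, hu1rd, hu2rd])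
  have hset : {x | x ∈ eds s q (u₁ ++ u₂)} = ℓ₁ ∪ ℓ₂ := by
    rw [eds_append, hu1rd]
    ext x
    simp only [Set.mem_setOf_eq, List.mem_append, Set.mem_union]
    rw [← hu1set, ← hu2set]
    rfl
  rwa [hset] at this

section Pairs

variable (s : MemSkel Γ) (F : Set (Set Γ))

/-- union of the rejecting cycles included in C -/
def RejU (C : Set (s.M × Γ)) : Set (s.M × Γ) :=
  ⋃₀ {R | (AM s).IsCycle R ∧ (AM s).cycCol R ∉ F ∧ R ⊆ C}

/-- union of the cycles sharing a state with C -/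
def Terr (C : Set (s.M × Γ)) : Set (s.M × Γ) :=
  ⋃₀ {ℓ | (AM s).IsCycle ℓ ∧ ((AM s).statesOf ℓ ∩ (AM s).statesOf C).Nonempty}

def ECp (C : Set (s.M × Γ)) : Set (s.M × Γ) := C \ RejU s F C
def FCp (C : Set (s.M × Γ)) : Set (s.M × Γ) := Terr s C \ C

/-- an accepting cycle is not covered by its rejecting subcycles -/
lemma not_covered
    (hP1 : ∀ ℓ₁ ℓ₂ : Set (s.M × Γ),
      (AM s).IsCycle ℓ₁ → (AM s).IsCycle ℓ₂ →
      ((AM s).statesOf ℓ₁ ∩ (AM s).statesOf ℓ₂).Nonempty →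
      (AM s).cycCol ℓ₁ ∉ F → (AM s).cycCol ℓ₂ ∉ F →
      (AM s).cycCol (ℓ₁ ∪ ℓ₂) ∉ F)
    {C : Set (s.M × Γ)} (hcyc : (AM s).IsCycle C)
    (hacc : (AM s).cycCol C ∈ F) : (ECp s F C).Nonempty := by
  rw [Set.nonempty_iff_ne_empty]
  intro hcov
  have hsub : C ⊆ RejU s F C := by
    intro x hx
    by_contra hnx
    have : x ∈ ECp s F C := ⟨hx, hnx⟩
    rw [hcov] at this
    exact this
  obtain ⟨e, he⟩ := cycle_nonempty hcyc
  obtain ⟨u, hune, hurd, huset⟩ := word_of_cycle s hcyc (src_mem_statesOf he)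
  set L := eds s e.1 u with hL
  have hLlen : 0 < L.length := by
    rw [List.length_pos_iff]
    simp [hL, hune]
  have hmemC : ∀ i (hi : i < L.length), L.get ⟨i, hi⟩ ∈ C := by
    intro i hi
    rw [← huset]
    exact List.get_mem _ _
  have hchain := chain'_eds s u e.1
  rw [← hL] at hchain
  replace hchain := List.isChain_iff_getElem.1 hchain
  have main : ∀ n, n < L.length → ∃ R, (AM s).IsCycle R ∧ (AM s).cycCol R ∉ F ∧ R ⊆ C ∧
      ∀ i ≤ n, ∀ (hi : i < L.length), L.get ⟨i, hi⟩ ∈ R := by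
    intro n
    induction n with
    | zero =>
      intro hn
      obtain ⟨R, ⟨hRc, hRr, hRs⟩, hxR⟩ := hsub (hmemC 0 hn)
      exact ⟨R, hRc, hRr, hRs, by
        intro i hi hilt
        interval_cases i
        exact hxR⟩
    | succ n ih =>
      intro hn
      obtain ⟨R, hRc, hRr, hRs, hRmem⟩ := ih (by omega)
      obtain ⟨R', ⟨hR'c, hR'r, hR's⟩, hxR'⟩ := hsub (hmemC (n+1) hn)
      have hshare : (((AM s).statesOf R) ∩ ((AM s).statesOf R')).Nonempty := by
        refine ⟨(L.get ⟨n+1, hn⟩).1, ?_, src_mem_statesOf hxR'⟩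
        have hrel : (AM s).next (L.get ⟨n, by omega⟩) = (L.get ⟨n+1, hn⟩).1 := hchain n (by omega)
        rw [← hrel]
        exact next_mem_statesOf (hRmem n le_rfl (by omega))
      refine ⟨R ∪ R', union_isCycle s hRc hR'c hshare,
        hP1 R R' hRc hR'c hshare hRr hR'r,
        Set.union_subset hRs hR's, ?_⟩
      intro i hi hilt
      rcases Nat.lt_or_ge i (n+1) with h | h
      · exact Or.inl (hRmem i (by omega) hilt)
      · have : i = n + 1 := by omega
        subst this
        exact Or.inr hxR'
  obtain ⟨R, hRc, hRr, hRs, hRmem⟩ := main (L.length - 1) (by omega)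
  have : C ⊆ R := by
    intro x hx
    rw [← huset] at hx
    obtain ⟨⟨i, hi⟩, rfl⟩ := List.mem_iff_get.1 hx
    exact hRmem i (by omega) hi
  have : R = C := Set.Subset.antisymm hRs this
  rw [this] at hRr
  exact hRr hacc

/-- any rejecting cycle fails the pair of C -/
lemma pair_rejects {C D : Set (s.M × Γ)} (hDc : (AM s).IsCycle D)
    (hDr : (AM s).cycCol D ∉ F) (hne : (D ∩ ECp s F C).Nonempty) :
    (D ∩ FCp s C).Nonempty := by
  obtain ⟨e, heD, heE⟩ := hne
  obtain ⟨heC, heR⟩ := heE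
  by_cases hsub : D ⊆ C
  · exact absurd (show e ∈ RejU s F C from ⟨D, ⟨hDc, hDr, hsub⟩, heD⟩) heR
  · rw [Set.not_subset] at hsub
    obtain ⟨f, hfD, hfC⟩ := hsub
    exact ⟨f, hfD,
      ⟨show f ∈ Terr s C from ⟨D, ⟨hDc, ⟨e.1, src_mem_statesOf heD, src_mem_statesOf heC⟩⟩, hfD⟩, hfC⟩⟩

end Pairs

end Stmt14
namespace Stmt14

variable {Γ : Type}

/-- the Rabin automaton with edges as output colours -/
def Bs (s : MemSkel Γ) : DetAut Γ (s.M × Γ) s.M :=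
  DetAut.mk s.m0 (fun m a => (s.upd m a, (m, a)))

lemma Bs_run_succ (s : MemSkel Γ) (w : ℕ → Γ) (n : ℕ) :
    (Bs s).run w (n + 1) = s.upd ((Bs s).run w n) (w n) := rfl

lemma Bs_output (s : MemSkel Γ) (w : ℕ → Γ) (n : ℕ) :
    (Bs s).output w n = ((Bs s).run w n, w n) := rfl

/-- segment of an infinite word -/
def seg (w : ℕ → Γ) (a d : ℕ) : List Γ := List.ofFn fun i : Fin d => w (a + i)

lemma seg_succ (w : ℕ → Γ) (a d : ℕ) : seg w a (d + 1) = w a :: seg w (a + 1) d := by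
  rw [seg, List.ofFn_succ, seg]
  congr 1
  apply congrArg List.ofFn
  funext i
  congr 1
  simp [Fin.val_succ]
  omega

lemma rd_seg (s : MemSkel Γ) (w : ℕ → Γ) :
    ∀ d a, rd s ((Bs s).run w a) (seg w a d) = (Bs s).run w (a + d) := by
  intro d
  induction d with
  | zero => intro a; simp [seg]
  | succ d ih =>
    intro a
    rw [seg_succ, rd_cons, ← Bs_run_succ, ih (a + 1)]
    congr 1
    omega

lemma eds_seg (s : MemSkel Γ) (w : ℕ → Γ) :
    ∀ d a, eds s ((Bs s).run w a) (seg w a d)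
      = List.ofFn (fun i : Fin d => (Bs s).output w (a + i)) := by
  intro d
  induction d with
  | zero => intro a; simp [seg]
  | succ d ih =>
    intro a
    rw [seg_succ, eds_cons, ← Bs_run_succ, ih (a + 1), List.ofFn_succ]
    congr 1
    apply congrArg List.ofFn
    funext i
    congr 1
    simp [Fin.val_succ]
    omega

lemma infOcc_isCycle [Fintype Γ] (s : MemSkel Γ) (w : ℕ → Γ) :
    (AM s).IsCycle (InfOcc ((Bs s).output w)) ∧
    (AM s).cycCol (InfOcc ((Bs s).output w)) = InfOcc w := by
  classical
  set O := (Bs s).output w with hO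
  set I := InfOcc O with hI
  -- uniform bound after which all outputs are in I
  have hbound : ∀ t : s.M × Γ, t ∉ I → ∃ n, ∀ m, n ≤ m → O m ≠ t := by
    intro t ht
    rw [hI, InfOcc, Set.mem_setOf_eq] at ht
    push_neg at ht
    obtain ⟨n, hn⟩ := ht
    exact ⟨n, fun m hm => hn m hm⟩
  set f : (s.M × Γ) → ℕ := fun t => if h : t ∈ I then 0 else (hbound t h).choose with hf
  set N₀ := Finset.univ.sup f with hN₀def
  have hIn : ∀ m, N₀ ≤ m → O m ∈ I := by
    intro m hm
    by_contra hmem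
    have h1 : f (O m) ≤ N₀ := Finset.le_sup (Finset.mem_univ _)
    have h2 : f (O m) = (hbound (O m) hmem).choose := by rw [hf]; simp [hmem]
    exact (hbound (O m) hmem).choose_spec m (by omega) rfl
  -- uniform bound by which all of I has been visited (after N₀)
  set g : (s.M × Γ) → ℕ := fun t => if h : t ∈ I then (h N₀).choose else 0 with hg
  set N₁ := max (N₀ + 1) (Finset.univ.sup g + 1) with hN₁def
  have hN₀₁ : N₀ < N₁ := lt_of_lt_of_le (Nat.lt_succ_self _) (le_max_left _ _)
  have hReach : ∀ t ∈ I, ∃ m, N₀ ≤ m ∧ m < N₁ ∧ O m = t := by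
    intro t ht
    refine ⟨(ht N₀).choose, (ht N₀).choose_spec.1, ?_, (ht N₀).choose_spec.2⟩
    have h1 : g t ≤ Finset.univ.sup g := Finset.le_sup (Finset.mem_univ _)
    have h2 : g t = (ht N₀).choose := by rw [hg]; simp [ht]
    have h3 := le_max_right (N₀ + 1) (Finset.univ.sup g + 1)
    omega
  -- recurrence of the first state
  have ht₀ : O N₀ ∈ I := hIn N₀ le_rfl
  obtain ⟨N₂, hN₂ge, hN₂eq⟩ := ht₀ N₁
  have hrun : (Bs s).run w N₂ = (Bs s).run w N₀ := by
    have := congrArg Prod.fst hN₂eq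
    exact this
  set d := N₂ - N₀ with hd
  have hdpos : 0 < d := by omega
  set u := seg w N₀ d with hu
  have hune : u ≠ [] := by
    rw [hu, seg]
    intro hnil
    have := congrArg List.length hnil
    simp at this
    omega
  have hurd : rd s ((Bs s).run w N₀) u = (Bs s).run w N₀ := by
    rw [hu, rd_seg]
    rw [show N₀ + d = N₂ by omega]
    exact hrun
  have hset : {x | x ∈ eds s ((Bs s).run w N₀) u} = I := by
    rw [hu, eds_seg]
    ext t
    simp only [Set.mem_setOf_eq, List.mem_ofFn, Set.mem_range]
    constructor
    · rintro ⟨i, rfl⟩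
      exact hIn _ (by omega)
    · intro ht
      obtain ⟨m, hm1, hm2, hm3⟩ := hReach t ht
      refine ⟨⟨m - N₀, by omega⟩, ?_⟩
      rw [show N₀ + (m - N₀ : ℕ) = m by omega]
      exact hm3
  constructor
  · have := isCycle_of_word s ((Bs s).run w N₀) u hune hurd
    rwa [hset] at this
  · rw [cycCol_eq_snd_image]
    ext a
    constructor
    · rintro ⟨t, htI, rfl⟩
      intro n
      obtain ⟨m, hm1, hm2⟩ := htI n
      exact ⟨m, hm1, by rw [← hm2]; rfl⟩
    · intro ha
      obtain ⟨m, hm1, hm2⟩ := ha N₀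
      exact ⟨O m, hIn m hm1, by rw [hO, Bs_output]; exact hm2⟩

/-- the Rabin language equality, given the part-1 property -/
lemma rabin_exists [Fintype Γ] (s : MemSkel Γ) (F : Set (Set Γ))
    (hP1 : ∀ ℓ₁ ℓ₂ : Set (s.M × Γ),
      (AM s).IsCycle ℓ₁ → (AM s).IsCycle ℓ₂ →
      ((AM s).statesOf ℓ₁ ∩ (AM s).statesOf ℓ₂).Nonempty →
      (AM s).cycCol ℓ₁ ∉ F → (AM s).cycCol ℓ₂ ∉ F →
      (AM s).cycCol (ℓ₁ ∪ ℓ₂) ∉ F) :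
    ∃ (Γ' : Type) (out' : s.M → Γ → Γ') (R : List (Set Γ' × Set Γ')),
      RabinLang (DetAut.mk s.m0 (fun m a => (s.upd m a, out' m a))) R = LF F := by
  classical
  letI : Fintype (Set (s.M × Γ)) := Fintype.ofFinite _
  refine ⟨s.M × Γ, fun m a => (m, a),
    (Finset.univ.toList (α := Set (s.M × Γ))).map (fun C => (ECp s F C, FCp s C)), ?_⟩
  ext w
  show RabinAccept _ ((Bs s).output w) ↔ InfOcc w ∈ F
  obtain ⟨hcyc, hcol⟩ := infOcc_isCycle s w
  constructor
  · rintro ⟨p, hpR, hne, hempty⟩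
    obtain ⟨C, _, rfl⟩ := List.mem_map.1 hpR
    by_contra hrej
    rw [← hcol] at hrej
    obtain ⟨x, hx⟩ := pair_rejects s F hcyc hrej hne
    rw [hempty] at hx
    exact hx
  · intro hF
    refine ⟨(ECp s F (InfOcc ((Bs s).output w)), FCp s (InfOcc ((Bs s).output w))),
      List.mem_map.2 ⟨_, Finset.mem_toList.2 (Finset.mem_univ _), rfl⟩, ?_, ?_⟩
    · obtain ⟨x, hx⟩ := not_covered s F hP1 hcyc (by rw [hcol]; exact hF)
      exact ⟨x, hx.1, hx⟩
    · ext x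
      simp only [Set.mem_inter_iff, FCp, Set.mem_diff, Set.mem_empty_iff_false, iff_false]
      tauto

end Stmt14
namespace Stmt14

variable {Γ : Type}

/-- loop lengths -/
abbrev AA (w : Bool → List Γ) : Bool → ℕ := fun b => (w b).length - 1

/-- vertices of the gadget game -/
abbrev GV (l₀ : List Γ) (w : Bool → List Γ) : Type :=
  (Fin l₀.length ⊕ Unit) ⊕ (Σ b : Bool, Fin (AA w b))

def cV (l₀ : List Γ) (w : Bool → List Γ) : GV l₀ w := Sum.inl (Sum.inr ())
def pV (l₀ : List Γ) (w : Bool → List Γ) (j : Fin l₀.length) : GV l₀ w := Sum.inl (Sum.inl j)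
def lV (l₀ : List Γ) (w : Bool → List Γ) (b : Bool) (j : Fin (AA w b)) : GV l₀ w :=
  Sum.inr ⟨b, j⟩

@[simp] lemma pV_ne_cV (l₀ : List Γ) (w : Bool → List Γ) (j : Fin l₀.length) :
    pV l₀ w j ≠ cV l₀ w := by simp [pV, cV]

@[simp] lemma lV_ne_cV (l₀ : List Γ) (w : Bool → List Γ) (b : Bool) (j : Fin (AA w b)) :
    lV l₀ w b j ≠ cV l₀ w := by simp [lV, cV]

/-- successor of a non-choice vertex -/
def sucv (l₀ : List Γ) (w : Bool → List Γ) : GV l₀ w → GV l₀ w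
  | .inl (.inl j) => if h : (j : ℕ) + 1 < l₀.length then pV l₀ w ⟨(j : ℕ) + 1, h⟩ else cV l₀ w
  | .inl (.inr _) => cV l₀ w
  | .inr ⟨b, j⟩ => if h : (j : ℕ) + 1 < AA w b then lV l₀ w b ⟨(j : ℕ) + 1, h⟩ else cV l₀ w

/-- label of the outgoing edge of a non-choice vertex -/
def labv (l₀ : List Γ) (w : Bool → List Γ) (d : Γ) : GV l₀ w → Γ
  | .inl (.inl j) => l₀.getD j d
  | .inl (.inr _) => d
  | .inr ⟨b, j⟩ => (w b).getD ((j : ℕ) + 1) d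

/-- the colouring of the gadget game -/
def gcol (l₀ : List Γ) (w : Bool → List Γ) (d : Γ) : GV l₀ w → GV l₀ w → Option Γ :=
  fun v u =>
    match v with
    | .inl (.inr _) =>
      match u with
      | .inr ⟨b, j⟩ => if (j : ℕ) = 0 then some ((w b).getD 0 d) else none
      | _ => none
    | _ => if u = sucv l₀ w v then some (labv l₀ w d v) else none

lemma gcol_ne_cV (l₀ : List Γ) (w : Bool → List Γ) (d : Γ) (v u : GV l₀ w)
    (hv : v ≠ cV l₀ w) :
    gcol l₀ w d v u = if u = sucv l₀ w v then some (labv l₀ w d v) else none := by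
  rcases v with (j | u') | ⟨b, j⟩
  · rfl
  · exact absurd rfl hv
  · rfl

lemma gcol_cV_lV (l₀ : List Γ) (w : Bool → List Γ) (d : Γ) (b : Bool) (h : 0 < AA w b) :
    gcol l₀ w d (cV l₀ w) (lV l₀ w b ⟨0, h⟩) = some ((w b).getD 0 d) := by
  show (if ((⟨0, h⟩ : Fin (AA w b)) : ℕ) = 0 then some ((w b).getD 0 d) else none) = _
  simp

lemma edge_from_cV (l₀ : List Γ) (w : Bool → List Γ) (d : Γ) (u : GV l₀ w)
    (h : gcol l₀ w d (cV l₀ w) u ≠ none) :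
    ∃ (b : Bool) (h0 : 0 < AA w b), u = lV l₀ w b ⟨0, h0⟩ := by
  rcases u with (j | u') | ⟨b, j⟩
  · exact absurd rfl h
  · exact absurd rfl h
  · refine ⟨b, ?_, ?_⟩
    · have : (j : ℕ) = 0 := by
        by_contra hj
        apply h
        show (if (j : ℕ) = 0 then some ((w b).getD 0 d) else none) = none
        simp [hj]
      omega
    · have hj : (j : ℕ) = 0 := by
        by_contra hj
        apply h
        show (if (j : ℕ) = 0 then some ((w b).getD 0 d) else none) = none
        simp [hj]
      simp [lV, Fin.ext_iff, hj]

/-- the gadget game -/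
def TheGame (l₀ : List Γ) (w : Bool → List Γ) (d : Γ) (hA : ∀ b, 0 < AA w b) : Game Γ where
  V := GV l₀ w
  EveV := Set.univ
  edge := fun v u => gcol l₀ w d v u ≠ none
  v0 := if h : 0 < l₀.length then pV l₀ w ⟨0, h⟩ else cV l₀ w
  col := gcol l₀ w d
  exists_succ := by
    intro v
    by_cases hv : v = cV l₀ w
    · refine ⟨lV l₀ w true ⟨0, hA true⟩, ?_⟩
      show gcol l₀ w d v _ ≠ none
      rw [hv, gcol_cV_lV]
      simp
    · refine ⟨sucv l₀ w v, ?_⟩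
      show gcol l₀ w d v _ ≠ none
      rw [gcol_ne_cV l₀ w d v _ hv]
      simp
  no_eps_cycle := by
    rintro ⟨v, l, hch⟩
    cases l with
    | nil =>
      have := (List.chain_cons.1 hch).1
      exact this.1 this.2
    | cons x xs =>
      rw [List.cons_append] at hch
      have := (List.chain_cons.1 hch).1
      exact this.1 this.2

lemma TheGame_epsFree (l₀ : List Γ) (w : Bool → List Γ) (d : Γ) (hA : ∀ b, 0 < AA w b) :
    (TheGame l₀ w d hA).EpsFree := fun _ _ h => h

/-- configurations of a play driven by the loop-choice sequence ϕ -/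
def confF (l₀ : List Γ) (w : Bool → List Γ) (hA : ∀ b, 0 < AA w b) (ϕ : ℕ → Bool) :
    ℕ → GV l₀ w × ℕ
  | 0 => (if h : 0 < l₀.length then pV l₀ w ⟨0, h⟩ else cV l₀ w, 0)
  | n + 1 =>
    if (confF l₀ w hA ϕ n).1 = cV l₀ w then
      (lV l₀ w (ϕ (confF l₀ w hA ϕ n).2) ⟨0, hA _⟩, (confF l₀ w hA ϕ n).2 + 1)
    else (sucv l₀ w (confF l₀ w hA ϕ n).1, (confF l₀ w hA ϕ n).2)

def playF (l₀ : List Γ) (w : Bool → List Γ) (hA : ∀ b, 0 < AA w b) (ϕ : ℕ → Bool) (n : ℕ) :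
    GV l₀ w := (confF l₀ w hA ϕ n).1

/-- start time of the m-th loop traversal -/
def TT (l₀ : List Γ) (w : Bool → List Γ) (ϕ : ℕ → Bool) : ℕ → ℕ
  | 0 => l₀.length
  | m + 1 => TT l₀ w ϕ m + (w (ϕ m)).length

end Stmt14
namespace Stmt14

variable {Γ : Type}

section Timeline

variable (l₀ : List Γ) (w : Bool → List Γ) (hA : ∀ b, 0 < AA w b) (ϕ : ℕ → Bool)

lemma confF_zero :
    confF l₀ w hA ϕ 0 = (if h : 0 < l₀.length then pV l₀ w ⟨0, h⟩ else cV l₀ w, 0) := rfl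

lemma confF_succ (n : ℕ) :
    confF l₀ w hA ϕ (n + 1) =
      if (confF l₀ w hA ϕ n).1 = cV l₀ w then
        (lV l₀ w (ϕ (confF l₀ w hA ϕ n).2) ⟨0, hA _⟩, (confF l₀ w hA ϕ n).2 + 1)
      else (sucv l₀ w (confF l₀ w hA ϕ n).1, (confF l₀ w hA ϕ n).2) := rfl

lemma conf_initial : ∀ j, j ≤ l₀.length →
    confF l₀ w hA ϕ j = (if h : j < l₀.length then pV l₀ w ⟨j, h⟩ else cV l₀ w, 0) := by
  intro j
  induction j with
  | zero => intro _; rfl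
  | succ j ih =>
    intro hj
    have hjlt : j < l₀.length := by omega
    rw [confF_succ, ih (by omega)]
    simp only [dif_pos hjlt]
    rw [if_neg (by simp)]
    show (sucv l₀ w (pV l₀ w ⟨j, hjlt⟩), 0) = _
    show (if h : j + 1 < l₀.length then pV l₀ w ⟨j + 1, h⟩ else cV l₀ w, 0) = _
    rcases Nat.lt_or_ge (j+1) l₀.length with h | h
    · rw [dif_pos h]
    · rw [dif_neg (by omega)]

lemma conf_inner_of_base (m : ℕ) (hbase : confF l₀ w hA ϕ (TT l₀ w ϕ m) = (cV l₀ w, m)) :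
    ∀ j, j ≤ AA w (ϕ m) →
      confF l₀ w hA ϕ (TT l₀ w ϕ m + 1 + j) =
        (if h : j < AA w (ϕ m) then lV l₀ w (ϕ m) ⟨j, h⟩ else cV l₀ w, m + 1) := by
  intro j
  induction j with
  | zero =>
    intro _
    rw [show TT l₀ w ϕ m + 1 + 0 = TT l₀ w ϕ m + 1 by omega, confF_succ, hbase]
    rw [if_pos (show (cV l₀ w, m).1 = cV l₀ w from rfl), dif_pos (hA (ϕ m))]
  | succ j ih =>
    intro hj
    have hjlt : j < AA w (ϕ m) := by omega
    rw [show TT l₀ w ϕ m + 1 + (j + 1) = (TT l₀ w ϕ m + 1 + j) + 1 by omega,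
      confF_succ, ih (by omega)]
    simp only [dif_pos hjlt]
    rw [if_neg (by simp)]
    show (sucv l₀ w (lV l₀ w (ϕ m) ⟨j, hjlt⟩), m + 1) = _
    show (if h : j + 1 < AA w (ϕ m) then lV l₀ w (ϕ m) ⟨j + 1, h⟩ else cV l₀ w, m + 1) = _
    rcases Nat.lt_or_ge (j+1) (AA w (ϕ m)) with h | h
    · rw [dif_pos h]
    · rw [dif_neg (by omega)]

lemma conf_cV : ∀ m, confF l₀ w hA ϕ (TT l₀ w ϕ m) = (cV l₀ w, m) := by
  intro m
  induction m with
  | zero =>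
    rw [show TT l₀ w ϕ 0 = l₀.length from rfl, conf_initial l₀ w hA ϕ _ le_rfl]
    rw [dif_neg (by omega)]
  | succ m ih =>
    have h := conf_inner_of_base l₀ w hA ϕ m ih (AA w (ϕ m)) le_rfl
    rw [dif_neg (by omega)] at h
    have harith : TT l₀ w ϕ m + 1 + AA w (ϕ m) = TT l₀ w ϕ (m + 1) := by
      show _ = TT l₀ w ϕ m + (w (ϕ m)).length
      have := hA (ϕ m)
      simp only [AA] at *
      omega
    rwa [harith] at h

lemma conf_inner (m : ℕ) : ∀ j, j ≤ AA w (ϕ m) →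
    confF l₀ w hA ϕ (TT l₀ w ϕ m + 1 + j) =
      (if h : j < AA w (ϕ m) then lV l₀ w (ϕ m) ⟨j, h⟩ else cV l₀ w, m + 1) :=
  conf_inner_of_base l₀ w hA ϕ m (conf_cV l₀ w hA ϕ m)

include hA in
lemma TT_ge : ∀ m, l₀.length + m ≤ TT l₀ w ϕ m := by
  intro m
  induction m with
  | zero => simp [TT]
  | succ m ih =>
    have := hA (ϕ m)
    show _ ≤ TT l₀ w ϕ m + (w (ϕ m)).length
    simp only [AA] at this
    omega

include hA in
/-- every position past the initial segment lies in some traversal -/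
lemma cover : ∀ n, l₀.length ≤ n → ∃ m j, j ≤ AA w (ϕ m) ∧ n = TT l₀ w ϕ m + j := by
  intro n
  induction n with
  | zero =>
    intro h
    exact ⟨0, 0, Nat.zero_le _, by show (0 : ℕ) = l₀.length + 0; omega⟩
  | succ n ih =>
    intro h
    rcases Nat.lt_or_ge n l₀.length with h' | h'
    · exact ⟨0, 0, Nat.zero_le _, by show n + 1 = l₀.length + 0; omega⟩
    · obtain ⟨m, j, hj, hn⟩ := ih h'
      clear ih
      rcases Nat.lt_or_ge j (AA w (ϕ m)) with hlt | hge
      · exact ⟨m, j + 1, by omega, by omega⟩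
      · refine ⟨m + 1, 0, Nat.zero_le _, ?_⟩
        show n + 1 = TT l₀ w ϕ m + (w (ϕ m)).length + 0
        have h0 : 0 < (w (ϕ m)).length - 1 := hA (ϕ m)
        have h1 : AA w (ϕ m) = (w (ϕ m)).length - 1 := rfl
        rw [h1] at hj hge
        omega

/-- colour of the steps in the initial segment -/
lemma col_initial (d : Γ) : ∀ j, j < l₀.length →
    gcol l₀ w d (playF l₀ w hA ϕ j) (playF l₀ w hA ϕ (j + 1)) = some (l₀.getD j d) := by
  intro j hj
  have h1 : playF l₀ w hA ϕ j = pV l₀ w ⟨j, hj⟩ := by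
    rw [playF, conf_initial l₀ w hA ϕ j (by omega)]
    simp only [dif_pos hj]
  have h2 : playF l₀ w hA ϕ (j + 1) =
      if h : j + 1 < l₀.length then pV l₀ w ⟨j + 1, h⟩ else cV l₀ w := by
    rw [playF, conf_initial l₀ w hA ϕ (j + 1) (by omega)]
  rw [h1, h2, gcol_ne_cV l₀ w d _ _ (by simp)]
  rw [if_pos]
  · rfl
  · show _ = sucv l₀ w (pV l₀ w ⟨j, hj⟩)
    rfl

/-- colour of the steps within loop traversals -/
lemma col_loop (d : Γ) : ∀ m j, j ≤ AA w (ϕ m) →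
    gcol l₀ w d (playF l₀ w hA ϕ (TT l₀ w ϕ m + j)) (playF l₀ w hA ϕ (TT l₀ w ϕ m + j + 1))
      = some ((w (ϕ m)).getD j d) := by
  intro m j hj
  rcases Nat.eq_zero_or_pos j with rfl | hjpos
  · have h1 : playF l₀ w hA ϕ (TT l₀ w ϕ m + 0) = cV l₀ w := by
      rw [playF, Nat.add_zero, conf_cV]
    have h2 : playF l₀ w hA ϕ (TT l₀ w ϕ m + 0 + 1) = lV l₀ w (ϕ m) ⟨0, hA (ϕ m)⟩ := by
      rw [playF, show TT l₀ w ϕ m + 0 + 1 = TT l₀ w ϕ m + 1 + 0 by omega,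
        conf_inner l₀ w hA ϕ m 0 (by omega)]
      simp only [dif_pos (hA (ϕ m))]
    rw [h1, h2, gcol_cV_lV]
  · have hj1 : j - 1 < AA w (ϕ m) := by omega
    have h1 : playF l₀ w hA ϕ (TT l₀ w ϕ m + j) = lV l₀ w (ϕ m) ⟨j - 1, hj1⟩ := by
      rw [playF, show TT l₀ w ϕ m + j = TT l₀ w ϕ m + 1 + (j - 1) by omega,
        conf_inner l₀ w hA ϕ m (j - 1) (by omega)]
      simp only [dif_pos hj1]
    have h2 : playF l₀ w hA ϕ (TT l₀ w ϕ m + j + 1) =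
        if h : j < AA w (ϕ m) then lV l₀ w (ϕ m) ⟨j, h⟩ else cV l₀ w := by
      rw [playF, show TT l₀ w ϕ m + j + 1 = TT l₀ w ϕ m + 1 + j by omega,
        conf_inner l₀ w hA ϕ m j hj]
    rw [h1, h2, gcol_ne_cV l₀ w d _ _ (by simp)]
    rw [if_pos]
    · show some ((w (ϕ m)).getD ((j : ℕ) - 1 + 1) d) = some ((w (ϕ m)).getD j d)
      rw [show j - 1 + 1 = j by omega]
    · show (if h : j < AA w (ϕ m) then lV l₀ w (ϕ m) ⟨j, h⟩ else cV l₀ w)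
          = if h : (j - 1) + 1 < AA w (ϕ m) then lV l₀ w (ϕ m) ⟨(j - 1) + 1, h⟩ else cV l₀ w
      rw [show j - 1 + 1 = j by omega]

/-- every step of the play has a colour -/
lemma col_total (d : Γ) : ∀ n, ∃ a,
    gcol l₀ w d (playF l₀ w hA ϕ n) (playF l₀ w hA ϕ (n + 1)) = some a := by
  intro n
  rcases Nat.lt_or_ge n l₀.length with h | h
  · exact ⟨_, col_initial l₀ w hA ϕ d n h⟩
  · obtain ⟨m, j, hj, rfl⟩ := cover l₀ w hA ϕ n h
    exact ⟨_, col_loop l₀ w hA ϕ d m j hj⟩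

lemma isPlay_playF (d : Γ) : (TheGame l₀ w d hA).IsPlay (playF l₀ w hA ϕ) := by
  constructor
  · rfl
  · intro n
    obtain ⟨a, ha⟩ := col_total l₀ w hA ϕ d n
    show gcol l₀ w d _ _ ≠ none
    rw [ha]
    simp

end Timeline

end Stmt14
namespace Stmt14

variable {Γ : Type}

lemma st_succ_col {G : Game Γ} (s : MemSkel Γ) (ρ : ℕ → G.V) (n : ℕ) (a : Γ)
    (h : G.col (ρ n) (ρ (n + 1)) = some a) :
    (s.toMem G).st ρ (n + 1) = s.upd ((s.toMem G).st ρ n) a := by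
  show (s.toMem G).upd ((s.toMem G).st ρ n) (ρ n, ρ (n + 1)) = _
  show (match G.col (ρ n) (ρ (n+1)) with
    | none => (s.toMem G).st ρ n
    | some a => s.upd ((s.toMem G).st ρ n) a) = _
  rw [h]

section Timeline2

variable (l₀ : List Γ) (w : Bool → List Γ) (hA : ∀ b, 0 < AA w b) (ϕ : ℕ → Bool) (d : Γ)

include hA in
lemma infCol_sub :
    ∀ a ∈ (TheGame l₀ w d hA).InfCol (playF l₀ w hA ϕ), ∃ m, a ∈ w (ϕ m) := by
  intro a ha
  obtain ⟨n, hn, hcol⟩ := ha l₀.length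
  obtain ⟨m, j, hj, rfl⟩ := cover l₀ w hA ϕ n hn
  have hthis := col_loop l₀ w hA ϕ d m j hj
  have hja : (w (ϕ m)).getD j d = a := Option.some_inj.1 (hthis.symm.trans hcol)
  have hjlt : j < (w (ϕ m)).length := by
    have h0 : 0 < (w (ϕ m)).length - 1 := hA (ϕ m)
    have h1 : AA w (ϕ m) = (w (ϕ m)).length - 1 := rfl
    rw [h1] at hj; omega
  refine ⟨m, ?_⟩
  rw [← hja, List.getD_eq_getElem _ _ hjlt]
  exact List.getElem_mem hjlt

include hA in
lemma infCol_sup (b : Bool) (hb : ∀ k, ∃ m, k ≤ m ∧ ϕ m = b) :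
    ∀ a ∈ w b, a ∈ (TheGame l₀ w d hA).InfCol (playF l₀ w hA ϕ) := by
  intro a ha
  obtain ⟨⟨j, hj⟩, rfl⟩ := List.mem_iff_get.1 ha
  intro n
  obtain ⟨m, hm, hϕ⟩ := hb n
  have hjA : j ≤ AA w (ϕ m) := by
    have h1 : AA w (ϕ m) = (w (ϕ m)).length - 1 := rfl
    rw [hϕ] at *
    omega
  refine ⟨TT l₀ w ϕ m + j, ?_, ?_⟩
  · have := TT_ge l₀ w hA ϕ m
    omega
  · have := col_loop l₀ w hA ϕ d m j hjA
    show gcol l₀ w d _ _ = _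
    rw [this]
    congr 1
    have hjlt : j < (w b).length := hj
    rw [hϕ, List.getD_eq_getElem _ _ hjlt]; rfl

include hA in
lemma infCol_eq (bs : Set Bool) (hbs1 : ∀ m, ϕ m ∈ bs)
    (hbs2 : ∀ b ∈ bs, ∀ k, ∃ m, k ≤ m ∧ ϕ m = b) :
    (TheGame l₀ w d hA).InfCol (playF l₀ w hA ϕ) = {a | ∃ b ∈ bs, a ∈ w b} := by
  ext a
  constructor
  · intro ha
    obtain ⟨m, hm⟩ := infCol_sub l₀ w hA ϕ d a ha
    exact ⟨ϕ m, hbs1 m, hm⟩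
  · rintro ⟨b, hbs, ha⟩
    exact infCol_sup l₀ w hA ϕ d b (hbs2 b hbs) a ha

variable (s : MemSkel Γ) (q : s.M)

include hA in
lemma st_initial (hl : rd s s.m0 l₀ = q) :
    ∀ j, j ≤ l₀.length →
      (s.toMem (TheGame l₀ w d hA)).st (playF l₀ w hA ϕ) j = rd s s.m0 (l₀.take j) := by
  intro j
  induction j with
  | zero => intro _; rfl
  | succ j ih =>
    intro hj
    have hjlt : j < l₀.length := by omega
    rw [st_succ_col (G := TheGame l₀ w d hA) s (playF l₀ w hA ϕ) j _ (col_initial l₀ w hA ϕ d j hjlt), ih (by omega)]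
    rw [← List.take_concat_get hjlt, List.concat_eq_append, rd_append]
    show rd s (rd s s.m0 (List.take j l₀)) [l₀.getD j d] = _
    rw [List.getD_eq_getElem _ _ hjlt]

include hA in
lemma st_loop_of_base (hw : ∀ b, rd s q (w b) = q) (m : ℕ)
    (hbase : (s.toMem (TheGame l₀ w d hA)).st (playF l₀ w hA ϕ) (TT l₀ w ϕ m) = q) :
    ∀ j, j ≤ (w (ϕ m)).length →
      (s.toMem (TheGame l₀ w d hA)).st (playF l₀ w hA ϕ) (TT l₀ w ϕ m + j)
        = rd s q ((w (ϕ m)).take j) := by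
  intro j
  induction j with
  | zero => intro _; simpa using hbase
  | succ j ih =>
    intro hj
    have hjA : j ≤ AA w (ϕ m) := by
      have h1 : AA w (ϕ m) = (w (ϕ m)).length - 1 := rfl
      omega
    have hjlt : j < (w (ϕ m)).length := by omega
    rw [show TT l₀ w ϕ m + (j + 1) = (TT l₀ w ϕ m + j) + 1 by omega,
      st_succ_col (G := TheGame l₀ w d hA) s (playF l₀ w hA ϕ) _ _ (col_loop l₀ w hA ϕ d m j hjA), ih (by omega)]
    rw [← List.take_concat_get hjlt, List.concat_eq_append, rd_append]
    show rd s (rd s q (List.take j (w (ϕ m)))) [(w (ϕ m)).getD j d] = _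
    rw [List.getD_eq_getElem _ _ hjlt]

include hA in
lemma st_cV (hl : rd s s.m0 l₀ = q) (hw : ∀ b, rd s q (w b) = q) :
    ∀ m, (s.toMem (TheGame l₀ w d hA)).st (playF l₀ w hA ϕ) (TT l₀ w ϕ m) = q := by
  intro m
  induction m with
  | zero =>
    have := st_initial l₀ w hA ϕ d s q hl l₀.length le_rfl
    rw [List.take_length] at this
    rw [show TT l₀ w ϕ 0 = l₀.length from rfl, this, hl]
  | succ m ih =>
    have := st_loop_of_base l₀ w hA ϕ d s q hw m ih (w (ϕ m)).length le_rfl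
    rw [List.take_length, hw] at this
    exact this

include hA in
lemma st_of_cV (hl : rd s s.m0 l₀ = q) (hw : ∀ b, rd s q (w b) = q) (n : ℕ)
    (hn : playF l₀ w hA ϕ n = cV l₀ w) :
    (s.toMem (TheGame l₀ w d hA)).st (playF l₀ w hA ϕ) n = q := by
  rcases Nat.lt_or_ge n l₀.length with h | h
  · exfalso
    have := conf_initial l₀ w hA ϕ n (by omega)
    rw [playF, this] at hn
    rw [dif_pos h] at hn
    exact pV_ne_cV l₀ w _ hn
  · obtain ⟨m, j, hj, rfl⟩ := cover l₀ w hA ϕ n h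
    rcases Nat.eq_zero_or_pos j with rfl | hjpos
    · rw [Nat.add_zero]
      exact st_cV l₀ w hA ϕ d s q hl hw m
    · exfalso
      have hj1 : j - 1 < AA w (ϕ m) := by omega
      have := conf_inner l₀ w hA ϕ m (j - 1) (by omega)
      rw [playF, show TT l₀ w ϕ m + j = TT l₀ w ϕ m + 1 + (j - 1) by omega, this] at hn
      rw [dif_pos hj1] at hn
      exact lV_ne_cV l₀ w _ _ hn

include hA in
lemma consist (hl : rd s s.m0 l₀ = q) (hw : ∀ b, rd s q (w b) = q)
    (nm : GV l₀ w → s.M → GV l₀ w)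
    (hvalid : ∀ v x, gcol l₀ w d v (nm v x) ≠ none)
    (b : Bool) (hb : nm (cV l₀ w) q = lV l₀ w b ⟨0, hA b⟩) :
    ∀ n, playF l₀ w hA (fun _ => b) (n + 1)
      = nm (playF l₀ w hA (fun _ => b) n)
          ((s.toMem (TheGame l₀ w d hA)).st (playF l₀ w hA (fun _ => b)) n) := by
  intro n
  by_cases h : playF l₀ w hA (fun _ => b) n = cV l₀ w
  · have h' : (confF l₀ w hA (fun _ => b) n).1 = cV l₀ w := h
    have hstep : playF l₀ w hA (fun _ => b) (n + 1) = lV l₀ w b ⟨0, hA b⟩ := by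
      rw [playF, confF_succ, if_pos h']
    rw [hstep, st_of_cV l₀ w hA _ d s q hl hw n h, h, hb]
  · have h' : ¬ (confF l₀ w hA (fun _ => b) n).1 = cV l₀ w := h
    have hstep : playF l₀ w hA (fun _ => b) (n + 1)
        = sucv l₀ w (playF l₀ w hA (fun _ => b) n) := by
      rw [playF, confF_succ, if_neg h']
      rfl
    rw [hstep]
    have hval := hvalid (playF l₀ w hA (fun _ => b) n)
      ((s.toMem (TheGame l₀ w d hA)).st (playF l₀ w hA (fun _ => b)) n)
    rw [gcol_ne_cV l₀ w d _ _ h] at hval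
    by_cases heq : nm (playF l₀ w hA (fun _ => b) n)
        ((s.toMem (TheGame l₀ w d hA)).st (playF l₀ w hA (fun _ => b)) n)
        = sucv l₀ w (playF l₀ w hA (fun _ => b) n)
    · exact heq.symm
    · rw [if_neg heq] at hval
      exact absurd rfl hval

include hA in
lemma exists_strategy (F : Set (Set Γ))
    (hF : (TheGame l₀ w d hA).InfCol
        (playF l₀ w hA (fun m => decide (m % 2 = 0))) ∈ F) :
    (TheGame l₀ w d hA).WinsEve F := by
  classical
  set ϕa : ℕ → Bool := fun m => decide (m % 2 = 0) with hϕa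
  refine ⟨fun h v => if v = playF l₀ w hA ϕa h.length then playF l₀ w hA ϕa (h.length + 1)
    else (if v = cV l₀ w then lV l₀ w true ⟨0, hA true⟩ else sucv l₀ w v), ?_, ?_⟩
  · intro h v _
    beta_reduce
    by_cases h1 : v = playF l₀ w hA ϕa h.length
    · erw [if_pos h1, h1]
      exact (isPlay_playF l₀ w hA ϕa d).2 h.length
    · erw [if_neg h1]
      by_cases h2 : v = cV l₀ w
      · erw [if_pos h2, h2]
        show gcol l₀ w d _ _ ≠ none
        rw [gcol_cV_lV]
        simp
      · erw [if_neg h2]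
        show gcol l₀ w d _ _ ≠ none
        rw [gcol_ne_cV l₀ w d _ _ h2, if_pos rfl]
        simp
  · intro ρ hplay hcons
    have hall : ∀ n, ρ n = playF l₀ w hA ϕa n := by
      intro n
      induction n with
      | zero => exact hplay.1
      | succ n ih =>
        have hlen : ((TheGame l₀ w d hA).hist ρ n).length = n := by
          simp [Game.hist]
        rw [hcons n (Set.mem_univ _)]
        beta_reduce
        simp only [hlen, ih]
        exact if_pos rfl
    have : ρ = playF l₀ w hA ϕa := funext hall
    rw [this]
    exact hF

end Timeline2

end Stmt14
namespace Stmt14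

variable {Γ : Type}

lemma part1_main (s : MemSkel Γ) (F : Set (Set Γ)) (hind : s.ArenaIndepEf F)
    (hreach : ∀ x : s.M, ∃ l : List Γ, l.foldl s.upd s.m0 = x) :
    ∀ ℓ₁ ℓ₂ : Set (s.M × Γ), (AM s).IsCycle ℓ₁ → (AM s).IsCycle ℓ₂ →
      ((AM s).statesOf ℓ₁ ∩ (AM s).statesOf ℓ₂).Nonempty →
      (AM s).cycCol ℓ₁ ∉ F → (AM s).cycCol ℓ₂ ∉ F → (AM s).cycCol (ℓ₁ ∪ ℓ₂) ∉ F := by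
  intro ℓ₁ ℓ₂ hc1 hc2 hsh hr1 hr2 hmem
  obtain ⟨q, hq1, hq2⟩ := hsh
  obtain ⟨u₁, hu1ne, hu1rd, hu1set⟩ := word_of_cycle s hc1 hq1
  obtain ⟨u₂, hu2ne, hu2rd, hu2set⟩ := word_of_cycle s hc2 hq2
  obtain ⟨l₀, hl₀⟩ := hreach q
  set w : Bool → List Γ := fun b => if b then u₁ ++ u₁ else u₂ ++ u₂ with hwdef
  set d : Γ := u₁.head hu1ne with hd
  have hA : ∀ b, 0 < AA w b := by
    intro b
    have h1 : 0 < u₁.length := List.length_pos_iff.2 hu1ne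
    have h2 : 0 < u₂.length := List.length_pos_iff.2 hu2ne
    cases b <;> simp [hwdef, AA] <;> omega
  have hws : ∀ b, rd s q (w b) = q := by
    intro b
    cases b <;> simp [hwdef, rd_append, hu1rd, hu2rd]
  have hl : rd s s.m0 l₀ = q := hl₀
  have hw_mem_t : {a | a ∈ w true} = (AM s).cycCol ℓ₁ := by
    rw [← hu1set, cycCol_eds]
    ext a
    simp [hwdef]
  have hw_mem_f : {a | a ∈ w false} = (AM s).cycCol ℓ₂ := by
    rw [← hu2set, cycCol_eds]
    ext a
    simp [hwdef]
  -- Eve wins the gadget game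
  have hF' : (TheGame l₀ w d hA).InfCol
      (playF l₀ w hA (fun m => decide (m % 2 = 0))) ∈ F := by
    have hEq := infCol_eq l₀ w hA (fun m => decide (m % 2 = 0)) d Set.univ
      (fun m => Set.mem_univ _) ?_
    · rw [hEq]
      have hset : {a | ∃ b ∈ Set.univ, a ∈ w b} = (AM s).cycCol (ℓ₁ ∪ ℓ₂) := by
        have him : (AM s).cycCol (ℓ₁ ∪ ℓ₂) = (AM s).cycCol ℓ₁ ∪ (AM s).cycCol ℓ₂ :=
          Set.image_union _ _ _
        rw [him, ← hw_mem_t, ← hw_mem_f]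
        ext a
        constructor
        · rintro ⟨b, _, hab⟩
          cases b
          · exact Or.inr hab
          · exact Or.inl hab
        · rintro (hab | hab)
          · exact ⟨true, Set.mem_univ _, hab⟩
          · exact ⟨false, Set.mem_univ _, hab⟩
      rw [hset]
      exact hmem
    · intro b _ k
      cases b
      · exact ⟨2 * k + 1, by omega, by simp [Nat.add_mod]⟩
      · exact ⟨2 * k, by omega, by simp⟩
  have hwins := exists_strategy l₀ w hA d F hF'
  obtain ⟨nm, hvalid, hwin⟩ := hind (TheGame l₀ w d hA) (TheGame_epsFree l₀ w d hA) hwins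
  have hvalid' : ∀ (v : GV l₀ w) (x : s.M), gcol l₀ w d v (nm v x) ≠ none :=
    fun v x => hvalid v x (Set.mem_univ v)
  obtain ⟨b, h0, hb⟩ := edge_from_cV l₀ w d (nm (cV l₀ w) q) (hvalid' (cV l₀ w) q)
  have hplay := isPlay_playF l₀ w hA (fun _ => b) d
  have hconsist := consist l₀ w hA d s q hl hws nm hvalid' b hb
  have hwinρ := hwin (playF l₀ w hA (fun _ => b)) hplay (fun n _ => hconsist n)
  have hEqb := infCol_eq l₀ w hA (fun _ => b) d {b} (fun m => rfl)
    (fun b' hb' k => ⟨k, le_rfl, (Set.mem_singleton_iff.1 hb').symm⟩)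
  rw [hEqb] at hwinρ
  have hsingle : {a | ∃ b' ∈ ({b} : Set Bool), a ∈ w b'} = {a | a ∈ w b} := by
    ext a
    simp
  rw [hsingle] at hwinρ
  cases b
  · rw [hw_mem_f] at hwinρ
    exact hr2 hwinρ
  · rw [hw_mem_t] at hwinρ
    exact hr1 hwinρ

end Stmt14
/-- If `s` is an arena-independent memory for `ε`-free `F`-games in which every
state is reachable from the initial one, then in the Muller automaton `A_M`
the union of two intersecting rejecting cycles is rejecting; consequently a
Rabin condition can be defined on top of `A_M`, yielding a Rabin automaton
recognising `L_F` with `|M|` states. -/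
theorem stmt14 {Γ : Type} [Fintype Γ] (F : Set (Set Γ)) (s : MemSkel Γ)
    (hind : s.ArenaIndepEf F)
    (hreach : ∀ x : s.M, ∃ l : List Γ, l.foldl s.upd s.m0 = x) :
    (∀ ℓ₁ ℓ₂ : Set (s.M × Γ),
        (AM s).IsCycle ℓ₁ → (AM s).IsCycle ℓ₂ →
        ((AM s).statesOf ℓ₁ ∩ (AM s).statesOf ℓ₂).Nonempty →
        (AM s).cycCol ℓ₁ ∉ F → (AM s).cycCol ℓ₂ ∉ F →
        (AM s).cycCol (ℓ₁ ∪ ℓ₂) ∉ F) ∧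
    (∃ (Γ' : Type) (out' : s.M → Γ → Γ') (R : List (Set Γ' × Set Γ')),
        RabinLang (DetAut.mk s.m0 (fun m a => (s.upd m a, out' m a))) R
          = LF F) := by
  have hP1 := Stmt14.part1_main s F hind hreach
  exact ⟨hP1, Stmt14.rabin_exists s F hP1⟩
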